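/- Set dr := X₁ + X₂ + X₃ and U := I_{12}^{+}P₁^{+} − (3/4) I_{12}^{+}P₃^{+} − (1/4) I_{12}^{+}P₃^{−} + (3/4) I_{12}^{−}P₃^{+} − (3/4) I_{12}^{−}P₃^{−}. Then (K+1)(dr · U) = 0, i.e. U is a nonzero solution with proper value 0 and co-value 0 of the inhomogeneous proper-value problem for the total operator (K+1)·dr. -/
import Mathlib


open scoped TensorProduct

noncomputable section

/-- The standard positive-definite quadratic form on `ℝ³`. -/
abbrev Q3 : QuadraticForm ℝ (Fin 3 → ℝ) :=
  QuadraticMap.weightedSumSquares ℝ (fun _ : Fin 3 => (1 : ℝ))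

/-- The Clifford algebra of 3-dimensional Euclidean space. -/
abbrev Cl3 : Type := CliffordAlgebra Q3

/-- The tensor product of two copies of `Cl3`, as ℝ-algebras. -/
abbrev A3 : Type := Cl3 ⊗[ℝ] Cl3

/-- The generators `e₁, e₂, e₃` (indexed by `Fin 3`). -/
def e (l : Fin 3) : Cl3 := CliffordAlgebra.ι Q3 (Pi.single l 1)

/-- `X_l := e_l ⊗ e_l`. -/
def X (l : Fin 3) : A3 := e l ⊗ₜ[ℝ] e l

/-- `w^i := (e_j e_k) ⊗ 1` for `(i,j,k)` a cyclic permutation of the indices. -/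
def w (i : Fin 3) : A3 := (e (i + 1) * e (i + 2)) ⊗ₜ[ℝ] (1 : Cl3)

/-- The (ℝ-linear) operators `J_l(U) := (1/2)(w^l U − U w^l)`. -/
def J (l : Fin 3) (U : A3) : A3 := (1/2 : ℝ) • (w l * U - U * w l)

/-- Kähler's total angular momentum operator `K+1`. -/
def K1 (U : A3) : A3 := J 0 U * w 0 + J 1 U * w 1 + J 2 U * w 2

/-- The idempotents `I_{ij}^ε := (1/2)(1 + ε X_i X_j)`. -/
def Iem (i j : Fin 3) (ε : ℝ) : A3 := (1/2 : ℝ) • ((1 : A3) + ε • (X i * X j))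

/-- The idempotents `P_l^δ := (1/2)(1 + δ X_l)`. -/
def P (l : Fin 3) (δ : ℝ) : A3 := (1/2 : ℝ) • ((1 : A3) + δ • X l)


lemma e_sq (l : Fin 3) : e l * e l = 1 := by
  rw [e, CliffordAlgebra.ι_sq_scalar]
  simp [QuadraticMap.weightedSumSquares_apply, Pi.single_apply]

lemma e_sq' (l : Fin 3) (x : Cl3) : e l * (e l * x) = x := by
  rw [← mul_assoc, e_sq, one_mul]

lemma e_anti (l m : Fin 3) (h : l ≠ m) : e l * e m = -(e m * e l) := by
  have h2 := CliffordAlgebra.ι_mul_ι_add_swap (Q := Q3) (Pi.single l 1) (Pi.single m 1)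
  have hp : QuadraticMap.polar Q3 (Pi.single l 1) (Pi.single m 1) = 0 := by
    simp [QuadraticMap.polar, QuadraticMap.weightedSumSquares_apply, Pi.single_apply,
      Fin.sum_univ_three]
    fin_cases l <;> fin_cases m <;> simp_all
  rw [hp, map_zero] at h2
  rw [e, e] at *
  exact eq_neg_of_add_eq_zero_left h2

lemma s10 : e 1 * e 0 = -(e 0 * e 1) := e_anti 1 0 (by decide)
lemma s20 : e 2 * e 0 = -(e 0 * e 2) := e_anti 2 0 (by decide)
lemma s21 : e 2 * e 1 = -(e 1 * e 2) := e_anti 2 1 (by decide)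
lemma s10' (x : Cl3) : e 1 * (e 0 * x) = -(e 0 * (e 1 * x)) := by
  rw [← mul_assoc, s10, neg_mul, mul_assoc]
lemma s20' (x : Cl3) : e 2 * (e 0 * x) = -(e 0 * (e 2 * x)) := by
  rw [← mul_assoc, s20, neg_mul, mul_assoc]
lemma s21' (x : Cl3) : e 2 * (e 1 * x) = -(e 1 * (e 2 * x)) := by
  rw [← mul_assoc, s21, neg_mul, mul_assoc]

/-- The key identity: `dr · U = (3/4) • 1`. -/
lemma key_dr_mul_U : (X 0 + X 1 + X 2) *
        (Iem 0 1 1 * P 0 1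
          - (3/4 : ℝ) • (Iem 0 1 1 * P 2 1)
          - (1/4 : ℝ) • (Iem 0 1 1 * P 2 (-1))
          + (3/4 : ℝ) • (Iem 0 1 (-1) * P 2 1)
          - (3/4 : ℝ) • (Iem 0 1 (-1) * P 2 (-1))) = (3/4 : ℝ) • 1 := by
  simp only [Iem, P, X, Algebra.TensorProduct.one_def,
    smul_add, smul_sub, smul_smul, mul_add, add_mul, mul_sub, sub_mul,
    smul_mul_assoc, mul_smul_comm, one_smul,
    Algebra.TensorProduct.tmul_mul_tmul, mul_one, one_mul,
    mul_assoc, e_sq, e_sq', s10, s20, s21, s10', s20', s21',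
    neg_mul, mul_neg, neg_neg, TensorProduct.neg_tmul, TensorProduct.tmul_neg,
    smul_neg, neg_smul, one_mul, mul_one]
  module

lemma K1_smul_one (c : ℝ) : K1 (c • 1) = 0 := by
  simp [K1, J, mul_smul_comm, smul_mul_assoc]

lemma one_ne_zero_A3 : (1 : A3) ≠ 0 := by
  intro h
  obtain ⟨f, hf⟩ : ∃ f : Module.Dual ℝ Cl3, f 1 ≠ 0 := by
    by_contra hc
    push_neg at hc
    exact one_ne_zero ((Module.forall_dual_apply_eq_zero_iff ℝ (1 : Cl3)).mp hc)
  have h2 := congrArg (TensorProduct.lift ((LinearMap.mul ℝ ℝ).compl₁₂ f f)) h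
  rw [Algebra.TensorProduct.one_def] at h2
  simp only [TensorProduct.lift.tmul, map_zero] at h2
  exact mul_ne_zero hf hf h2

/-- With `dr := X₁ + X₂ + X₃` and
`U := I₁₂⁺P₁⁺ − (3/4) I₁₂⁺P₃⁺ − (1/4) I₁₂⁺P₃⁻ + (3/4) I₁₂⁻P₃⁺ − (3/4) I₁₂⁻P₃⁻`,
`U` is a nonzero solution of `(K+1)(dr · U) = 0` (proper value `0`, co-value `0`). -/
theorem stmt16 :
    K1 ((X 0 + X 1 + X 2) *
        (Iem 0 1 1 * P 0 1
          - (3/4 : ℝ) • (Iem 0 1 1 * P 2 1)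
          - (1/4 : ℝ) • (Iem 0 1 1 * P 2 (-1))
          + (3/4 : ℝ) • (Iem 0 1 (-1) * P 2 1)
          - (3/4 : ℝ) • (Iem 0 1 (-1) * P 2 (-1)))) = 0 ∧
    (Iem 0 1 1 * P 0 1
      - (3/4 : ℝ) • (Iem 0 1 1 * P 2 1)
      - (1/4 : ℝ) • (Iem 0 1 1 * P 2 (-1))
      + (3/4 : ℝ) • (Iem 0 1 (-1) * P 2 1)
      - (3/4 : ℝ) • (Iem 0 1 (-1) * P 2 (-1))) ≠ 0 := by
  constructor
  · rw [key_dr_mul_U]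
    exact K1_smul_one _
  · intro h
    have h2 := key_dr_mul_U
    rw [h, mul_zero] at h2
    have : (1 : A3) = 0 := by
      have := congrArg (fun z => (4/3 : ℝ) • z) h2.symm
      simpa [smul_smul] using this
    exact one_ne_zero_A3 this
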